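/- For the equilibrium profile h_s, the coefficient m_s(ξ) := 2|h_s'(ξ)|^2 - 4 h_s(ξ) h_s''(ξ) + h_s(ξ)^2 is strictly positive for every ξ ∈ [-1,1]. -/

import Mathlib

noncomputable def hs : ℝ → ℝ := fun x =>
  (Real.exp 1 ^ 2 + 1) / (Real.exp 1 ^ 2 - 1) -
    (Real.exp (x + 1) + Real.exp (1 - x)) / (Real.exp 1 ^ 2 - 1)

lemma hs_hasDerivAt (x : ℝ) :
    HasDerivAt hs ((Real.exp (1 - x) - Real.exp (x + 1)) / (Real.exp 1 ^ 2 - 1)) x := by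
  have h1 : HasDerivAt (fun x : ℝ => Real.exp (x + 1)) (Real.exp (x + 1)) x := by
    simpa using ((hasDerivAt_id x).add_const 1).exp
  have h2 : HasDerivAt (fun x : ℝ => Real.exp (1 - x)) (-Real.exp (1 - x)) x := by
    simpa using ((hasDerivAt_id x).const_sub 1).exp
  have h3 := ((h1.add h2).div_const (Real.exp 1 ^ 2 - 1)).const_sub
      ((Real.exp 1 ^ 2 + 1) / (Real.exp 1 ^ 2 - 1))
  convert h3 using 1
  · rfl
  · rfl
  · rfl
  · ring

lemma hs_deriv : deriv hs = fun x =>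
    (Real.exp (1 - x) - Real.exp (x + 1)) / (Real.exp 1 ^ 2 - 1) :=
  funext fun x => (hs_hasDerivAt x).deriv

lemma hs_deriv2 (x : ℝ) : deriv (deriv hs) x =
    (-Real.exp (1 - x) - Real.exp (x + 1)) / (Real.exp 1 ^ 2 - 1) := by
  rw [hs_deriv]
  have h1 : HasDerivAt (fun x : ℝ => Real.exp (x + 1)) (Real.exp (x + 1)) x := by
    simpa using ((hasDerivAt_id x).add_const 1).exp
  have h2 : HasDerivAt (fun x : ℝ => Real.exp (1 - x)) (-Real.exp (1 - x)) x := by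
    simpa using ((hasDerivAt_id x).const_sub 1).exp
  have h3 := ((h2.sub h1).div_const (Real.exp 1 ^ 2 - 1))
  exact h3.deriv

theorem stmt_3 :
    ∀ ξ ∈ Set.Icc (-1 : ℝ) 1,
      0 < 2 * (deriv hs ξ) ^ 2 - 4 * hs ξ * deriv (deriv hs) ξ + hs ξ ^ 2 := by
  intro ξ hξ
  obtain ⟨hl, hr⟩ := hξ
  rw [hs_deriv2 ξ, hs_deriv]
  simp only [hs]
  set a := Real.exp (ξ + 1) with ha
  set b := Real.exp (1 - ξ) with hb
  have hab : a * b = Real.exp 1 ^ 2 := by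
    rw [ha, hb, ← Real.exp_add, sq, ← Real.exp_add]; ring_nf
  have ha1 : (1 : ℝ) ≤ a := by
    rw [ha]
    calc (1:ℝ) = Real.exp 0 := Real.exp_zero.symm
    _ ≤ Real.exp (ξ + 1) := Real.exp_le_exp.2 (by linarith)
  have ha2 : a ≤ Real.exp 1 ^ 2 := by
    rw [ha, sq, ← Real.exp_add]; exact Real.exp_le_exp.2 (by linarith)
  have he2 : (2 : ℝ) < Real.exp 1 := by
    have := Real.add_one_lt_exp (x := 1) (by norm_num); linarith
  have he : (1 : ℝ) < Real.exp 1 := by linarith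
  set e := Real.exp 1
  have hD : (0 : ℝ) < e ^ 2 - 1 := by nlinarith
  have hbpos : (0 : ℝ) < b := Real.exp_pos _
  -- key bounds on s = a + b
  have hsub : a + b ≤ e ^ 2 + 1 := by nlinarith [mul_nonneg (sub_nonneg.2 ha1) (sub_nonneg.2 ha2)]
  have hslb : 2 * e ≤ a + b := by nlinarith [sq_nonneg (a - b), Real.exp_pos 1]
  rw [div_sub_div_same, div_pow, div_pow]
  have key : 0 < 2 * (b - a) ^ 2 +
      4 * ((e ^ 2 + 1) - (a + b)) * (a + b) + ((e ^ 2 + 1) - (a + b)) ^ 2 := by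
    nlinarith [sq_nonneg (a + b - 2 * e), mul_pos hD hD]
  have hD2 : (0 : ℝ) < (e ^ 2 - 1) ^ 2 := by positivity
  have : 2 * ((b - a) ^ 2 / (e ^ 2 - 1) ^ 2) -
      4 * (((e ^ 2 + 1) - (a + b)) / (e ^ 2 - 1)) * ((-b - a) / (e ^ 2 - 1)) +
      ((e ^ 2 + 1) - (a + b)) ^ 2 / (e ^ 2 - 1) ^ 2 =
      (2 * (b - a) ^ 2 + 4 * ((e ^ 2 + 1) - (a + b)) * (a + b) +
        ((e ^ 2 + 1) - (a + b)) ^ 2) / (e ^ 2 - 1) ^ 2 := by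
    field_simp; ring
  rw [this]
  exact div_pos key hD2
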